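/- Let L : ℕ → ℚ and define P(n) = ∑_{k ∣ n} k · L(k). Define b : ℕ → ℚ by b(k) = ∑_{j ≥ 0, 2^j ∣ k} L(k / 2^j). Then for all n ≥ 1, ∑_{k ∣ n} (-1)^(n/k + 1) · k · b(k) = P(n). -/

import Mathlib

def bExp (L : ℕ → ℚ) (k : ℕ) : ℚ :=
  ∑ j ∈ Finset.range (k + 1), if 2 ^ j ∣ k then L (k / 2 ^ j) else 0

lemma bExp_odd (L : ℕ → ℚ) (k : ℕ) (h : ¬ 2 ∣ k) : bExp L k = L k := by
  unfold bExp
  rw [Finset.sum_eq_single 0]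
  · simp
  · intro j _ hj0
    exact if_neg fun hd => h ((dvd_pow_self 2 hj0).trans hd)
  · intro h0; exact absurd (Finset.mem_range.mpr (Nat.succ_pos k)) h0

lemma bExp_two_mul (L : ℕ → ℚ) (m : ℕ) (hm : 1 ≤ m) :
    bExp L (2 * m) = L (2 * m) + bExp L m := by
  unfold bExp
  rw [Finset.sum_range_succ']
  have h1 : ∀ j, (if 2 ^ (j + 1) ∣ 2 * m then L (2 * m / 2 ^ (j + 1)) else 0)
      = (if 2 ^ j ∣ m then L (m / 2 ^ j) else 0) := by
    intro j
    have hd : (2 ^ (j + 1) ∣ 2 * m) ↔ (2 ^ j ∣ m) := by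
      rw [pow_succ, mul_comm (2 ^ j) 2]
      exact Nat.mul_dvd_mul_iff_left (by norm_num)
    have hq : 2 * m / 2 ^ (j + 1) = m / 2 ^ j := by
      rw [pow_succ, mul_comm (2 ^ j) 2, Nat.mul_div_mul_left _ _ (by norm_num)]
    simp only [hq, hd]
  simp only [h1, pow_zero, one_dvd, if_true, Nat.div_one]
  rw [add_comm]
  congr 1
  refine (Finset.sum_subset ?_ ?_).symm
  · exact Finset.range_subset_range.mpr (by omega)
  · intro j hj hj'
    refine if_neg fun hd => ?_
    have h2 := Nat.le_of_dvd hm hd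
    have h3 : j < 2 ^ j := Nat.lt_two_pow_self (n := j)
    simp only [Finset.mem_range] at hj hj'
    omega

lemma divisors_half (n : ℕ) (hn : n ≠ 0) (h2 : 2 ∣ n) :
    n.divisors.filter (fun k => 2 ∣ n / k) = (n / 2).divisors := by
  ext k
  simp only [Nat.mem_divisors, Finset.mem_filter]
  constructor
  · rintro ⟨⟨hk, -⟩, u, hu⟩
    have hnk : n = 2 * (u * k) := by rw [← Nat.div_mul_cancel hk, hu]; ring
    exact ⟨⟨u, by rw [hnk, Nat.mul_div_cancel_left _ two_pos, mul_comm]⟩, by omega⟩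
  · rintro ⟨⟨u, hu⟩, -⟩
    have hkn : n = k * (2 * u) := by
      rw [← Nat.mul_div_cancel' h2, hu]; ring
    have hk0 : k ≠ 0 := by rintro rfl; simp at hkn; omega
    exact ⟨⟨⟨2 * u, hkn⟩, hn⟩, u,
      by rw [hkn, Nat.mul_div_cancel_left _ (Nat.pos_of_ne_zero hk0)]⟩

lemma sum_even_divisors (n : ℕ) (hn : n ≠ 0) (h2 : 2 ∣ n) (g : ℕ → ℚ) :
    ∑ k ∈ n.divisors, (if 2 ∣ k then g k else 0) = ∑ m ∈ (n / 2).divisors, g (2 * m) := by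
  rw [← Finset.sum_filter]
  refine Finset.sum_nbij' (fun k => k / 2) (fun m => 2 * m) ?_ ?_ ?_ ?_ ?_
  · rintro k hk
    simp only [Finset.mem_filter, Nat.mem_divisors] at hk
    obtain ⟨⟨⟨t, ht⟩, -⟩, a, ha⟩ := hk
    simp only [Nat.mem_divisors]
    have hn2 : n / 2 = a * t := by
      subst ha; subst ht; rw [mul_assoc, Nat.mul_div_cancel_left _ two_pos]
    refine ⟨⟨t, by rw [ha, Nat.mul_div_cancel_left _ two_pos, hn2]⟩, by omega⟩
  · rintro m hm
    simp only [Nat.mem_divisors] at hm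
    obtain ⟨⟨t, ht⟩, -⟩ := hm
    simp only [Finset.mem_filter, Nat.mem_divisors]
    have : n = 2 * m * t := by rw [← Nat.mul_div_cancel' h2, ht]; ring
    exact ⟨⟨⟨t, this⟩, hn⟩, m, rfl⟩
  · rintro k hk
    simp only [Finset.mem_filter, Nat.mem_divisors] at hk
    obtain ⟨-, hk2⟩ := hk
    exact Nat.mul_div_cancel' hk2
  · intro m _
    exact Nat.mul_div_cancel_left _ two_pos
  · rintro k hk
    simp only [Finset.mem_filter, Nat.mem_divisors] at hk
    rw [Nat.mul_div_cancel' hk.2]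

theorem b_signed_divisor_sum (L : ℕ → ℚ) :
    ∀ n : ℕ, 1 ≤ n →
      ∑ k ∈ n.divisors, (-1 : ℚ) ^ (n / k + 1) * k * bExp L k =
        ∑ k ∈ n.divisors, (↑k * L k) := by
  intro n hn
  have hn0 : n ≠ 0 := by omega
  by_cases h2 : 2 ∣ n
  · -- even case
    have hsign : ∀ k ∈ n.divisors, (-1 : ℚ) ^ (n / k + 1) * k * bExp L k
        = (k : ℚ) * bExp L k - 2 * (if 2 ∣ n / k then (k : ℚ) * bExp L k else 0) := by
      intro k hk
      by_cases hq : 2 ∣ n / k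
      · rw [if_pos hq]
        obtain ⟨u, hu⟩ := hq
        have hpow : (-1 : ℚ) ^ (n / k + 1) = -1 := by
          rw [hu, pow_succ, pow_mul]; norm_num
        rw [hpow]; ring
      · rw [if_neg hq]
        have ho : Odd (n / k) := Nat.odd_iff.mpr (by omega)
        have hpow : (-1 : ℚ) ^ (n / k + 1) = 1 := (ho.add_one).neg_one_pow
        rw [hpow]; ring
    have hA : ∑ k ∈ n.divisors, (k : ℚ) * bExp L k
        = (∑ k ∈ n.divisors, (k : ℚ) * L k)
          + 2 * ∑ m ∈ (n / 2).divisors, (m : ℚ) * bExp L m := by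
      have step : ∀ k ∈ n.divisors, (k : ℚ) * bExp L k
          = (k : ℚ) * L k + (if 2 ∣ k then (k : ℚ) * bExp L (k / 2) else 0) := by
        intro k hk
        rw [Nat.mem_divisors] at hk
        by_cases he : 2 ∣ k
        · obtain ⟨m, hm⟩ := he
          have hm1 : 1 ≤ m := by
            rcases Nat.eq_zero_or_pos m with h | h
            · exfalso; subst h; simp only [mul_zero] at hm; subst hm
              exact hn0 (Nat.eq_zero_of_zero_dvd hk.1)
            · exact h
          rw [if_pos ⟨m, hm⟩, hm, Nat.mul_div_cancel_left _ two_pos, bExp_two_mul L m hm1]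
          ring
        · rw [if_neg he, bExp_odd L k he, add_zero]
      rw [Finset.sum_congr rfl step, Finset.sum_add_distrib,
        sum_even_divisors n hn0 h2 (fun k => (k : ℚ) * bExp L (k / 2))]
      congr 1
      rw [Finset.mul_sum]
      refine Finset.sum_congr rfl fun m _ => ?_
      simp only [Nat.mul_div_cancel_left _ two_pos]
      push_cast; ring
    rw [Finset.sum_congr rfl hsign, Finset.sum_sub_distrib, ← Finset.mul_sum,
      ← Finset.sum_filter, divisors_half n hn0 h2, hA]
    ring
  · -- odd case
    refine Finset.sum_congr rfl fun k hk => ?_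
    rw [Nat.mem_divisors] at hk
    have hko : ¬ 2 ∣ k := fun h => h2 (h.trans hk.1)
    have hnk : ¬ 2 ∣ n / k := fun h => h2 (h.trans (Nat.div_dvd_of_dvd hk.1))
    rw [bExp_odd L k hko]
    have : (-1 : ℚ) ^ (n / k + 1) = 1 := by
      have : Even (n / k + 1) := by
        rcases Nat.even_or_odd (n / k) with he | ho
        · exact absurd (even_iff_two_dvd.mp he) hnk
        · exact ho.add_one
      exact this.neg_one_pow
    rw [this, one_mul]
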